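/- arXiv:2103.08753 — 2 statements merged into one kernel-verified Lean document; each statement's English description precedes it below -/
import Mathlib

section
/- Let 0 < α ≤ 1/2, H̃ > 0, and suppose H_t ≥ H̃·t^{-α} for all t ≥ 1. Choose λ₁ = H̃·T^α and λ_t = 0 for t ≥ 2. Then for constants C₁, D, Ĝ ≥ 0 and T ≥ 1, C₁ + (5/2)·D²·∑_{t=1}^T λ_t + Ĝ²·∑_{t=1}^T 1/(∑_{k=1}^t H_k + ∑_{k=1}^t λ_k) ≤ C₁ + (5H̃/2)·D²·T^α + (Ĝ²·(1-α)/(H̃·α))·T^α. -/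
open Finset

open Real in
/-- Bernoulli tangent inequality: `(x+1)^p ≤ x^p + p·x^(p-1)` for `x ≥ 1`, `0 ≤ p ≤ 1`. -/
lemma bern_up {x p : ℝ} (hx : 1 ≤ x) (hp0 : 0 ≤ p) (hp1 : p ≤ 1) :
    (x + 1) ^ p ≤ x ^ p + p * x ^ (p - 1) := by
  have hx0 : (0:ℝ) < x := lt_of_lt_of_le one_pos hx
  have hinv : (0:ℝ) < 1 / x := by positivity
  have h1 : x + 1 = x * (1 + 1 / x) := by field_simp
  have h2 : (1 + 1 / x) ^ p ≤ 1 + p * (1 / x) :=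
    rpow_one_add_le_one_add_mul_self (by linarith) hp0 hp1
  have h3 : (x + 1) ^ p = x ^ p * (1 + 1 / x) ^ p := by
    rw [h1, Real.mul_rpow hx0.le (by linarith)]
  have h4 : x ^ p * (1 + p * (1 / x)) = x ^ p + p * x ^ (p - 1) := by
    have : x ^ (p - 1) = x ^ p * x⁻¹ := by
      rw [show p - 1 = p + (-1) by ring, Real.rpow_add hx0, Real.rpow_neg_one]
    rw [this]; field_simp
  calc (x + 1) ^ p = x ^ p * (1 + 1 / x) ^ p := h3
    _ ≤ x ^ p * (1 + p * (1 / x)) := by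
        apply mul_le_mul_of_nonneg_left h2 (Real.rpow_nonneg hx0.le p)
    _ = x ^ p + p * x ^ (p - 1) := h4

open Real in
/-- Bernoulli tangent inequality: `(x-1)^p ≤ x^p - p·x^(p-1)` for `x ≥ 1`, `0 ≤ p ≤ 1`. -/
lemma bern_down {x p : ℝ} (hx : 1 ≤ x) (hp0 : 0 ≤ p) (hp1 : p ≤ 1) :
    (x - 1) ^ p ≤ x ^ p - p * x ^ (p - 1) := by
  have hx0 : (0:ℝ) < x := lt_of_lt_of_le one_pos hx
  have hinv : (0:ℝ) < 1 / x := by positivity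
  have hinv1 : 1 / x ≤ 1 := by rw [div_le_one hx0]; exact hx
  have h1 : x - 1 = x * (1 + (-(1 / x))) := by field_simp; ring
  have h2 : (1 + (-(1 / x))) ^ p ≤ 1 + p * (-(1 / x)) :=
    rpow_one_add_le_one_add_mul_self (by linarith) hp0 hp1
  have h3 : (x - 1) ^ p = x ^ p * (1 + (-(1 / x))) ^ p := by
    rw [h1, Real.mul_rpow hx0.le (by linarith)]
  have h4 : x ^ p * (1 + p * (-(1 / x))) = x ^ p - p * x ^ (p - 1) := by
    have : x ^ (p - 1) = x ^ p * x⁻¹ := by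
      rw [show p - 1 = p + (-1) by ring, Real.rpow_add hx0, Real.rpow_neg_one]
    rw [this]; field_simp; ring
  calc (x - 1) ^ p = x ^ p * (1 + (-(1 / x))) ^ p := h3
    _ ≤ x ^ p * (1 + p * (-(1 / x))) := by
        apply mul_le_mul_of_nonneg_left h2 (Real.rpow_nonneg hx0.le p)
    _ = x ^ p - p * x ^ (p - 1) := h4

open Real in
/-- Telescoping lower bound for `∑ k^(-α)`. -/
lemma sum_rpow_neg_ge {α : ℝ} (hα0 : 0 < α) (hα : α ≤ 1 / 2) :
    ∀ t : ℕ, 1 ≤ t →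
      (t:ℝ) ^ (1 - α) / (1 - α) - α / (1 - α) - 1 + (t:ℝ) ^ (-α)
        ≤ ∑ k ∈ Icc 1 t, (k:ℝ) ^ (-α) := by
  have h1α : (0:ℝ) < 1 - α := by linarith
  intro t ht
  induction t, ht using Nat.le_induction with
  | base =>
      rw [Icc_self, sum_singleton]
      push_cast
      rw [Real.one_rpow, Real.one_rpow]
      rw [div_sub_div_same]
      rw [div_self (ne_of_gt h1α)]
      linarith
  | succ t ht ih =>
      rw [Finset.sum_Icc_succ_top (by omega : 1 ≤ t + 1)]
      have htR : (1:ℝ) ≤ (t:ℝ) := by exact_mod_cast ht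
      have key : ((t:ℝ) + 1) ^ (1 - α) ≤ (t:ℝ) ^ (1 - α) + (1 - α) * (t:ℝ) ^ (-α) := by
        have := bern_up htR (le_of_lt h1α) (by linarith)
        rwa [show (1 - α) - 1 = -α by ring] at this
      have key2 : ((t:ℝ) + 1) ^ (1 - α) / (1 - α) ≤ (t:ℝ) ^ (1 - α) / (1 - α) + (t:ℝ) ^ (-α) := by
        rw [div_le_iff₀ h1α]
        calc ((t:ℝ) + 1) ^ (1 - α) ≤ (t:ℝ) ^ (1 - α) + (1 - α) * (t:ℝ) ^ (-α) := key
          _ = ((t:ℝ) ^ (1 - α) / (1 - α) + (t:ℝ) ^ (-α)) * (1 - α) := by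
              field_simp
      push_cast
      linarith

open Real in
/-- Power-sum upper bound: `∑_{t=1}^T t^(α-1) ≤ T^α / α`. -/
lemma sum_rpow_le {α : ℝ} (hα0 : 0 < α) (hα1 : α ≤ 1) :
    ∀ T : ℕ, 1 ≤ T → ∑ t ∈ Icc 1 T, (t:ℝ) ^ (α - 1) ≤ (T:ℝ) ^ α / α := by
  intro T hT
  induction T, hT using Nat.le_induction with
  | base =>
      rw [Icc_self, sum_singleton]
      push_cast
      rw [Real.one_rpow, Real.one_rpow, le_div_iff₀ hα0]
      linarith
  | succ T hT ih =>
      rw [Finset.sum_Icc_succ_top (by omega : 1 ≤ T + 1)]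
      have hTR : (1:ℝ) ≤ (T:ℝ) + 1 := by
        have : (1:ℝ) ≤ (T:ℝ) := by exact_mod_cast hT
        linarith
      have key : ((T:ℝ) + 1 - 1) ^ α ≤ ((T:ℝ) + 1) ^ α - α * ((T:ℝ) + 1) ^ (α - 1) :=
        bern_down hTR hα0.le hα1
      rw [show ((T:ℝ) + 1 - 1) = (T:ℝ) by ring] at key
      have key2 : ((T:ℝ) + 1) ^ (α - 1) ≤ ((T:ℝ) + 1) ^ α / α - (T:ℝ) ^ α / α := by
        rw [← sub_div, le_div_iff₀ hα0]
        nlinarith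
      push_cast
      linarith

/-- Case 3 of Corollary 4: with per-round strong convexity `H_t ≥ H̃ t^{-α}`,
`0 < α ≤ 1/2`, and the burst `λ₁ = H̃ T^α`, the master bound gives `O(T^α)` regret. -/
theorem intermediate_regret (α Htil C₁ D Ghat : ℝ)
    (hα0 : 0 < α) (hα : α ≤ 1 / 2) (hHtil : 0 < Htil)
    (hC₁ : 0 ≤ C₁) (hD : 0 ≤ D) (hGhat : 0 ≤ Ghat) (T : ℕ) (hT : 1 ≤ T)
    (H lam : ℕ → ℝ) (hH : ∀ t : ℕ, 1 ≤ t → Htil * (t : ℝ) ^ (-α) ≤ H t)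
    (hHnn : ∀ t, 0 ≤ H t)
    (hlam1 : lam 1 = Htil * (T : ℝ) ^ α) (hlam : ∀ t, 2 ≤ t → lam t = 0) :
    C₁ + 5 / 2 * D ^ 2 * (∑ t ∈ Finset.Icc 1 T, lam t) +
        Ghat ^ 2 * ∑ t ∈ Finset.Icc 1 T,
          1 / ((∑ k ∈ Finset.Icc 1 t, H k) + ∑ k ∈ Finset.Icc 1 t, lam k)
      ≤ C₁ + 5 * Htil / 2 * D ^ 2 * (T : ℝ) ^ α
        + Ghat ^ 2 * (1 - α) / (Htil * α) * (T : ℝ) ^ α := by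
  have h1α : (0:ℝ) < 1 - α := by linarith
  -- sum of lam over any Icc 1 t (t ≥ 1) is Htil * T^α
  have hlamsum : ∀ t : ℕ, 1 ≤ t → ∑ k ∈ Finset.Icc 1 t, lam k = Htil * (T:ℝ) ^ α := by
    intro t ht
    rw [Finset.sum_eq_single_of_mem 1 (Finset.mem_Icc.mpr ⟨le_refl 1, ht⟩)]
    · exact hlam1
    · intro b hb hb1
      exact hlam b (by rcases Finset.mem_Icc.mp hb with ⟨h1, _⟩; omega)
  -- termwise bound on reciprocals
  have hterm : ∀ t ∈ Finset.Icc 1 T,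
      1 / ((∑ k ∈ Finset.Icc 1 t, H k) + ∑ k ∈ Finset.Icc 1 t, lam k)
        ≤ (1 - α) / Htil * (t:ℝ) ^ (α - 1) := by
    intro t htmem
    obtain ⟨ht1, htT⟩ := Finset.mem_Icc.mp htmem
    have ht0 : (0:ℝ) < (t:ℝ) := by exact_mod_cast Nat.lt_of_lt_of_le Nat.zero_lt_one ht1
    have hHsum : Htil * ∑ k ∈ Finset.Icc 1 t, (k:ℝ) ^ (-α)
        ≤ ∑ k ∈ Finset.Icc 1 t, H k := by
      rw [Finset.mul_sum]
      exact Finset.sum_le_sum fun k hk => hH k (Finset.mem_Icc.mp hk).1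
    -- T^α ≥ t^α
    have htα : (t:ℝ) ^ α ≤ (T:ℝ) ^ α :=
      Real.rpow_le_rpow ht0.le (by exact_mod_cast htT) hα0.le
    -- AM-GM: t^α + t^(-α) ≥ 2
    have hamgm : 2 ≤ (t:ℝ) ^ α + (t:ℝ) ^ (-α) := by
      have hy : (0:ℝ) < (t:ℝ) ^ α := Real.rpow_pos_of_pos ht0 α
      have hneg : (t:ℝ) ^ (-α) = ((t:ℝ) ^ α)⁻¹ := by
        rw [Real.rpow_neg ht0.le]
      rw [hneg]
      have hyy : (t:ℝ) ^ α * ((t:ℝ) ^ α)⁻¹ = 1 := mul_inv_cancel₀ hy.ne'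
      nlinarith [sq_nonneg ((t:ℝ) ^ α - 1)]
    have h2α : 1 / (1 - α) ≤ 2 := by
      rw [div_le_iff₀ h1α]; linarith
    have hfieldid : α / (1 - α) + 1 = 1 / (1 - α) := by field_simp; ring
    have hS := sum_rpow_neg_ge hα0 hα t ht1
    -- key: denominator lower bound
    have hden : Htil * ((t:ℝ) ^ (1 - α) / (1 - α))
        ≤ (∑ k ∈ Finset.Icc 1 t, H k) + ∑ k ∈ Finset.Icc 1 t, lam k := by
      rw [hlamsum t ht1]
      have hmid : (t:ℝ) ^ (1 - α) / (1 - α)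
          ≤ (∑ k ∈ Finset.Icc 1 t, (k:ℝ) ^ (-α)) + (T:ℝ) ^ α := by linarith
      calc Htil * ((t:ℝ) ^ (1 - α) / (1 - α))
          ≤ Htil * ((∑ k ∈ Finset.Icc 1 t, (k:ℝ) ^ (-α)) + (T:ℝ) ^ α) :=
            mul_le_mul_of_nonneg_left hmid hHtil.le
        _ = Htil * (∑ k ∈ Finset.Icc 1 t, (k:ℝ) ^ (-α)) + Htil * (T:ℝ) ^ α := by ring
        _ ≤ (∑ k ∈ Finset.Icc 1 t, H k) + Htil * (T:ℝ) ^ α := by linarith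
    have hpos : (0:ℝ) < Htil * ((t:ℝ) ^ (1 - α) / (1 - α)) := by
      have := Real.rpow_pos_of_pos ht0 (1 - α)
      positivity
    have hrec := one_div_le_one_div_of_le hpos hden
    have heq : 1 / (Htil * ((t:ℝ) ^ (1 - α) / (1 - α)))
        = (1 - α) / Htil * (t:ℝ) ^ (α - 1) := by
      have hneg : (t:ℝ) ^ (α - 1) = ((t:ℝ) ^ (1 - α))⁻¹ := by
        rw [show α - 1 = -(1 - α) by ring, Real.rpow_neg ht0.le]
      have hp := Real.rpow_pos_of_pos ht0 (1 - α)
      rw [hneg]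
      field_simp
    rw [heq] at hrec
    exact hrec
  -- sum the termwise bounds
  have hsum : ∑ t ∈ Finset.Icc 1 T,
      1 / ((∑ k ∈ Finset.Icc 1 t, H k) + ∑ k ∈ Finset.Icc 1 t, lam k)
        ≤ (1 - α) / Htil * ((T:ℝ) ^ α / α) := by
    calc ∑ t ∈ Finset.Icc 1 T,
        1 / ((∑ k ∈ Finset.Icc 1 t, H k) + ∑ k ∈ Finset.Icc 1 t, lam k)
        ≤ ∑ t ∈ Finset.Icc 1 T, (1 - α) / Htil * (t:ℝ) ^ (α - 1) :=
          Finset.sum_le_sum hterm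
      _ = (1 - α) / Htil * ∑ t ∈ Finset.Icc 1 T, (t:ℝ) ^ (α - 1) := by
          rw [Finset.mul_sum]
      _ ≤ (1 - α) / Htil * ((T:ℝ) ^ α / α) := by
          apply mul_le_mul_of_nonneg_left (sum_rpow_le hα0 (by linarith) T hT)
          positivity
  have hfin : Ghat ^ 2 * ((1 - α) / Htil * ((T:ℝ) ^ α / α))
      = Ghat ^ 2 * (1 - α) / (Htil * α) * (T:ℝ) ^ α := by
    field_simp
  have hG2 : (0:ℝ) ≤ Ghat ^ 2 := sq_nonneg _
  have h3 : Ghat ^ 2 * ∑ t ∈ Finset.Icc 1 T,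
      1 / ((∑ k ∈ Finset.Icc 1 t, H k) + ∑ k ∈ Finset.Icc 1 t, lam k)
        ≤ Ghat ^ 2 * (1 - α) / (Htil * α) * (T:ℝ) ^ α := by
    rw [← hfin]
    exact mul_le_mul_of_nonneg_left hsum hG2
  rw [hlamsum T hT]
  have hlin : 5 / 2 * D ^ 2 * (Htil * (T:ℝ) ^ α) = 5 * Htil / 2 * D ^ 2 * (T:ℝ) ^ α := by ring
  linarith
end

section
/- Let f_t : K → ℝ (t = 1, ..., T) be H_t-strongly convex differentiable functions on a closed convex set K with diameter at most D, with ‖∇f_t(x)‖ ≤ G_t on K. Let g_t(x) = (λ_t/2)‖x‖² with λ_t ≥ 0, and run updates u_{t+1} = Proj_K(u_t - η_{t+1}·∇(f_t + g_t)(u_t)) with η_{t+1} = 1/(∑_{k=1}^t H_k + ∑_{k=1}^t λ_k) > 0, starting from u_1 ∈ K and assuming 0 ∈ K. Then for every u* ∈ K, ∑_{t=1}^T f_t(u_t) - ∑_{t=1}^T f_t(u*) ≤ (D²/2)·∑_{t=1}^T λ_t + (1/2)·∑_{t=1}^T (G_t + λ_t·D)²/(∑_{k=1}^t H_k + ∑_{k=1}^t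 λ_k). -/
set_option maxHeartbeats 1000000

open Finset
open scoped RealInnerProductSpace

lemma proj_contract {F : Type*} [NormedAddCommGroup F] [InnerProductSpace ℝ F]
    {K : Set F} (hKcv : Convex ℝ K) {p y : F} (hp : p ∈ K)
    (hmin : ∀ z ∈ K, ‖p - y‖ ≤ ‖z - y‖) : ∀ w ∈ K, ‖p - w‖ ^ 2 ≤ ‖y - w‖ ^ 2 := by
  intro w hw
  haveI : Nonempty K := ⟨⟨p, hp⟩⟩
  have hinf : ‖y - p‖ = ⨅ z : K, ‖y - (z : F)‖ := by
    apply le_antisymm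
    · apply le_ciInf
      intro z
      have := hmin z z.2
      rwa [norm_sub_rev, norm_sub_rev (z : F)] at this
    · refine ciInf_le ⟨0, ?_⟩ (⟨p, hp⟩ : K)
      rintro _ ⟨z, rfl⟩
      positivity
  have hobtuse : ⟪y - p, w - p⟫ ≤ 0 :=
    (norm_eq_iInf_iff_real_inner_le_zero hKcv hp).mp hinf w hw
  have hdecomp : y - w = (y - p) - (w - p) := by abel
  have hexp : ‖y - w‖ ^ 2 = ‖y - p‖ ^ 2 - 2 * ⟪y - p, w - p⟫ + ‖w - p‖ ^ 2 := by
    rw [hdecomp, norm_sub_sq_real]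
  have h1 : ‖p - w‖ ^ 2 = ‖w - p‖ ^ 2 := by rw [norm_sub_rev]
  linarith [sq_nonneg ‖y - p‖]

/-- Lemma 1 (adaptive online gradient descent, Hazan–Rakhlin–Bartlett): for
`H_t`-strongly convex losses `f_t` with gradient bound `G_t` on `K`, regularizers
`g_t(x) = (λ_t/2)‖x‖²`, and projected gradient updates with adaptive step size
`η_{t+1} = 1/(∑_{k≤t} H_k + ∑_{k≤t} λ_k)`, the regret against any `u* ∈ K` is at most
`(D²/2)∑λ_t + (1/2)∑ (G_t + λ_t D)²/(∑_{k≤t} H_k + ∑_{k≤t} λ_k)`. -/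
theorem adaptive_ogd_regret (n T : ℕ)
    (K : Set (EuclideanSpace ℝ (Fin n)))
    (hKne : K.Nonempty) (hKcl : IsClosed K) (hKcv : Convex ℝ K) (h0K : (0 : _) ∈ K)
    (D : ℝ) (hD : ∀ x ∈ K, ∀ y ∈ K, ‖x - y‖ ≤ D)
    (f : ℕ → EuclideanSpace ℝ (Fin n) → ℝ)
    (f' : ℕ → EuclideanSpace ℝ (Fin n) → EuclideanSpace ℝ (Fin n))
    (G H lam : ℕ → ℝ) (hlam : ∀ t, 0 ≤ lam t) (hHnn : ∀ t, 0 ≤ H t)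
    (hgrad : ∀ t x, HasGradientAt (f t) (f' t x) x)
    (hG : ∀ t, ∀ x ∈ K, ‖f' t x‖ ≤ G t)
    (hstrong : ∀ t, ∀ x ∈ K, ∀ y ∈ K,
      f t x + ⟪f' t x, y - x⟫ + H t / 2 * ‖y - x‖ ^ 2 ≤ f t y)
    (η : ℕ → ℝ)
    (hη : ∀ t : ℕ, η (t + 1) = 1 / ((∑ k ∈ Finset.Icc 1 t, H k) + ∑ k ∈ Finset.Icc 1 t, lam k))
    (hηpos : ∀ t : ℕ, 1 ≤ t → 0 < η (t + 1))
    (u : ℕ → EuclideanSpace ℝ (Fin n)) (hu1 : u 1 ∈ K) (huK : ∀ t, u t ∈ K)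
    (hupdate : ∀ t : ℕ, 1 ≤ t → ∀ z ∈ K,
      ‖u (t + 1) - (u t - η (t + 1) • (f' t (u t) + lam t • u t))‖
        ≤ ‖z - (u t - η (t + 1) • (f' t (u t) + lam t • u t))‖) :
    ∀ ustar ∈ K,
      (∑ t ∈ Finset.Icc 1 T, f t (u t)) - ∑ t ∈ Finset.Icc 1 T, f t ustar
        ≤ D ^ 2 / 2 * (∑ t ∈ Finset.Icc 1 T, lam t)
          + 1 / 2 * ∑ t ∈ Finset.Icc 1 T,
              (G t + lam t * D) ^ 2 /
                ((∑ k ∈ Finset.Icc 1 t, H k) + ∑ k ∈ Finset.Icc 1 t, lam k) := by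
  intro ustar hustar
  classical
  set S : ℕ → ℝ := fun t => (∑ k ∈ Finset.Icc 1 t, H k) + ∑ k ∈ Finset.Icc 1 t, lam k with hSdef
  set b : ℕ → ℝ := fun t => ‖u t - ustar‖ ^ 2 with hbdef
  have hD0 : 0 ≤ D := by simpa using hD 0 h0K 0 h0K
  have hnormK : ∀ x ∈ K, ‖x‖ ≤ D := fun x hx => by simpa using hD x hx 0 h0K
  have hSnn : ∀ t, 0 ≤ S t := fun t => add_nonneg (Finset.sum_nonneg fun k _ => hHnn k)
    (Finset.sum_nonneg fun k _ => hlam k)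
  have hηS : ∀ t, η (t + 1) = 1 / S t := fun t => hη t
  have hSpos : ∀ t, 1 ≤ t → 0 < S t := by
    intro t ht
    have h := hηpos t ht
    rw [hηS t] at h
    exact one_div_pos.mp h
  have hbnn : ∀ t, 0 ≤ b t := fun t => sq_nonneg _
  -- per-step inequality
  have step : ∀ M : ℕ,
      f (M + 1) (u (M + 1)) - f (M + 1) ustar ≤
        lam (M + 1) * D ^ 2 / 2 + (G (M + 1) + lam (M + 1) * D) ^ 2 / (2 * S (M + 1))
          + S M / 2 * b (M + 1) - S (M + 1) / 2 * b (M + 2) := by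
    intro M
    set s := M + 1 with hs
    have hs1 : 1 ≤ s := Nat.le_add_left 1 M
    have hSs : 0 < S s := hSpos s hs1
    set v : EuclideanSpace ℝ (Fin n) := f' s (u s) + lam s • u s with hv
    set e : ℝ := η (s + 1) with he
    have heS : e = 1 / S s := hηS s
    have hepos : 0 < e := heS ▸ one_div_pos.mpr hSs
    have hSe : S s * e = 1 := by rw [heS]; field_simp
    set y : EuclideanSpace ℝ (Fin n) := u s - e • v with hy
    -- projection / distance contraction
    have hkey : b (s + 1) ≤ ‖y - ustar‖ ^ 2 :=
      proj_contract hKcv (huK (s + 1)) (hupdate s hs1) ustar hustar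
    -- expand the squared norm
    have hexp2 : ‖y - ustar‖ ^ 2 = b s - 2 * e * ⟪v, u s - ustar⟫ + e ^ 2 * ‖v‖ ^ 2 := by
      have h1 : y - ustar = (u s - ustar) - e • v := by rw [hy]; abel
      rw [h1, norm_sub_sq_real, norm_smul, real_inner_smul_right, real_inner_comm]
      have hbseq : b s = ‖u s - ustar‖ ^ 2 := rfl
      rw [hbseq, Real.norm_eq_abs, mul_pow, sq_abs]
      ring
    have h1 : 2 * e * ⟪v, u s - ustar⟫ ≤ b s - b (s + 1) + e ^ 2 * ‖v‖ ^ 2 := by linarith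
    -- gradient norm bound
    have hvD : ‖v‖ ≤ G s + lam s * D := by
      calc ‖v‖ ≤ ‖f' s (u s)‖ + ‖lam s • u s‖ := norm_add_le _ _
        _ = ‖f' s (u s)‖ + lam s * ‖u s‖ := by rw [norm_smul, Real.norm_eq_abs, abs_of_nonneg (hlam s)]
        _ ≤ G s + lam s * D := add_le_add (hG s (u s) (huK s)) (mul_le_mul_of_nonneg_left (hnormK (u s) (huK s)) (hlam s))
    have hv2 : ‖v‖ ^ 2 ≤ (G s + lam s * D) ^ 2 := by
      have := norm_nonneg v
      nlinarith
    -- inner product bound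
    have hinner : ⟪v, u s - ustar⟫ ≤ S s / 2 * (b s - b (s + 1)) + e / 2 * ‖v‖ ^ 2 := by
      have h2 := mul_le_mul_of_nonneg_left h1 (le_of_lt (half_pos hSs))
      have h3 : S s / 2 * (2 * e * ⟪v, u s - ustar⟫) = (S s * e) * ⟪v, u s - ustar⟫ := by ring
      have h4 : S s / 2 * (b s - b (s + 1) + e ^ 2 * ‖v‖ ^ 2)
          = S s / 2 * (b s - b (s + 1)) + (S s * e) * (e / 2 * ‖v‖ ^ 2) := by ring
      rw [h3, h4, hSe, one_mul, one_mul] at h2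
      exact h2
    have hterm : e / 2 * ‖v‖ ^ 2 ≤ (G s + lam s * D) ^ 2 / (2 * S s) := by
      have h5 : e / 2 * ‖v‖ ^ 2 ≤ e / 2 * (G s + lam s * D) ^ 2 :=
        mul_le_mul_of_nonneg_left hv2 (le_of_lt (half_pos hepos))
      have h6 : e / 2 * (G s + lam s * D) ^ 2 = (G s + lam s * D) ^ 2 / (2 * S s) := by
        rw [heS, div_div, one_div, inv_mul_eq_div, mul_comm (S s) 2]
      linarith
    -- strong convexity
    have hsc := hstrong s (u s) (huK s) ustar hustar
    have hflip : ⟪f' s (u s), ustar - u s⟫ = - ⟪f' s (u s), u s - ustar⟫ := by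
      have : ustar - u s = -(u s - ustar) := by abel
      rw [this, inner_neg_right]
    have hnrev : ‖ustar - u s‖ ^ 2 = b s := by rw [norm_sub_rev]
    rw [hflip, hnrev] at hsc
    -- polarization for the regularizer part
    have hpolar : ⟪v, u s - ustar⟫ = ⟪f' s (u s), u s - ustar⟫
        + lam s / 2 * (‖u s‖ ^ 2 + b s - ‖ustar‖ ^ 2) := by
      rw [hv, inner_add_left, real_inner_smul_left]
      have hn := norm_sub_sq_real (u s) ustar
      have hi : ⟪u s, u s - ustar⟫ = ‖u s‖ ^ 2 - ⟪u s, ustar⟫ := by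
        rw [inner_sub_right, real_inner_self_eq_norm_sq]
      have hbs : b s = ‖u s - ustar‖ ^ 2 := rfl
      rw [hi, hbs]
      linear_combination (-(lam s) / 2) * hn
    have hust2 : ‖ustar‖ ^ 2 ≤ D ^ 2 := by
      have h := hnormK ustar hustar
      have := norm_nonneg ustar
      nlinarith
    have hus2 : (0:ℝ) ≤ ‖u s‖ ^ 2 := sq_nonneg _
    -- combine
    have hSrel : S s = S M + (H s + lam s) := by
      show S (M + 1) = S M + (H (M + 1) + lam (M + 1))
      simp only [hSdef]
      rw [Finset.sum_Icc_succ_top (Nat.le_add_left 1 M), Finset.sum_Icc_succ_top (Nat.le_add_left 1 M)]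
      ring
    have hlamD : lam s / 2 * ‖ustar‖ ^ 2 ≤ lam s * D ^ 2 / 2 := by
      nlinarith [hlam s]
    have hlamus : 0 ≤ lam s / 2 * ‖u s‖ ^ 2 :=
      mul_nonneg (by linarith [hlam s]) (sq_nonneg _)
    -- f s (u s) - f s ustar ≤ ⟪f', u-u*⟫ - H/2 b s  (from hsc)
    -- ⟪f', u-u*⟫ = ⟪v,·⟫ - lam/2 (‖u‖² + b s - ‖u*‖²)
    -- ⟪v,·⟫ ≤ S s/2 (b s - b(s+1)) + term
    show f s (u s) - f s ustar ≤
        lam s * D ^ 2 / 2 + (G s + lam s * D) ^ 2 / (2 * S s)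
          + S M / 2 * b s - S s / 2 * b (s + 1)
    have hSb : S s / 2 * b s = S M / 2 * b s + (H s + lam s) / 2 * b s := by
      rw [hSrel]; ring
    linarith [hsc, hpolar.le, hpolar.ge, hinner, hterm, hlamD, hlamus, hSb]
  -- main induction
  have main : ∀ M : ℕ,
      (∑ t ∈ Finset.Icc 1 M, f t (u t)) - (∑ t ∈ Finset.Icc 1 M, f t ustar)
        ≤ D ^ 2 / 2 * (∑ t ∈ Finset.Icc 1 M, lam t)
          + 1 / 2 * (∑ t ∈ Finset.Icc 1 M, (G t + lam t * D) ^ 2 / S t)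
          - S M / 2 * b (M + 1) := by
    intro M
    induction M with
    | zero => simp [hSdef]
    | succ M ih =>
      rw [Finset.sum_Icc_succ_top (Nat.le_add_left 1 M), Finset.sum_Icc_succ_top (Nat.le_add_left 1 M),
        Finset.sum_Icc_succ_top (Nat.le_add_left 1 M), Finset.sum_Icc_succ_top (Nat.le_add_left 1 M)]
      have hst := step M
      have hq : (G (M+1) + lam (M+1) * D) ^ 2 / (2 * S (M+1))
          = 1 / 2 * ((G (M+1) + lam (M+1) * D) ^ 2 / S (M+1)) := by
        rw [div_mul_eq_div_div_swap]
        ring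
      rw [hq] at hst
      linarith
  have hfin := main T
  have hlast : 0 ≤ S T / 2 * b (T + 1) := by
    have := hSnn T
    have := hbnn (T + 1)
    positivity
  have hSrw : (∑ t ∈ Finset.Icc 1 T, (G t + lam t * D) ^ 2 /
      ((∑ k ∈ Finset.Icc 1 t, H k) + ∑ k ∈ Finset.Icc 1 t, lam k))
      = ∑ t ∈ Finset.Icc 1 T, (G t + lam t * D) ^ 2 / S t := rfl
  rw [hSrw]
  linarith
end
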